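/- For every natural number a ≥ 0 and every odd natural number v, the binomial coefficient C(2^a · v, 2^a) is odd; consequently 2^a is the minimal positive u with C(2^a · v, u) odd. -/

import Mathlib

private lemma step (v u : ℕ) :
    Nat.choose (2 * v) u % 2 = (Nat.choose 0 (u % 2) * Nat.choose v (u / 2)) % 2 := by
  haveI : Fact (Nat.Prime 2) := ⟨Nat.prime_two⟩
  have h := Choose.choose_modEq_choose_mod_mul_choose_div_nat (p := 2) (n := 2 * v) (k := u)
  simp [Nat.mul_mod_right, Nat.mul_div_cancel_left] at h
  exact h

private lemma aux1 : ∀ a v : ℕ, Odd v → Odd (Nat.choose (2 ^ a * v) (2 ^ a)) := by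
  intro a
  induction a with
  | zero => intro v hv; simpa using hv
  | succ a ih =>
    intro v hv
    have h : 2 ^ (a + 1) * v = 2 * (2 ^ a * v) := by ring
    have h2 : (2:ℕ) ^ (a + 1) = 2 * 2 ^ a := by ring
    rw [h, h2, Nat.odd_iff, step]
    have := (ih v hv)
    rw [Nat.odd_iff] at this
    simp [Nat.mul_mod_right, Nat.mul_div_cancel_left, this]

private lemma aux2 : ∀ a u v : ℕ, Odd v → 0 < u →
    Odd (Nat.choose (2 ^ a * v) u) → 2 ^ a ≤ u := by
  intro a
  induction a with
  | zero => intro u v _ hu _; simpa using Nat.one_le_iff_ne_zero.mpr (Nat.pos_iff_ne_zero.mp hu)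
  | succ a ih =>
    intro u v hv hu hodd
    have h : 2 ^ (a + 1) * v = 2 * (2 ^ a * v) := by ring
    rw [h, Nat.odd_iff, step] at hodd
    rw [Nat.mul_mod] at hodd
    rcases Nat.even_or_odd u with he | ho
    · have h2 : u % 2 = 0 := Nat.even_iff.mp he
      have hpos : 0 < u / 2 := Nat.div_pos (by omega) (by norm_num)
      have : Odd (Nat.choose (2 ^ a * v) (u / 2)) := by
        rw [Nat.odd_iff]
        simp only [h2, Nat.choose_zero_right] at hodd
        omega
      have := ih (u / 2) v hv hpos this
      calc 2 ^ (a + 1) = 2 * 2 ^ a := by ring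
        _ ≤ 2 * (u / 2) := by omega
        _ ≤ u := Nat.mul_div_le u 2
    · exfalso
      have h2 : u % 2 = 1 := Nat.odd_iff.mp ho
      simp [h2] at hodd

theorem choose_two_pow_odd (a v : ℕ) (hv : Odd v) :
    Odd (Nat.choose (2 ^ a * v) (2 ^ a)) ∧
      IsLeast {u : ℕ | 0 < u ∧ Odd (Nat.choose (2 ^ a * v) u)} (2 ^ a) := by
  refine ⟨aux1 a v hv, ⟨Nat.pow_pos (by norm_num), aux1 a v hv⟩, ?_⟩
  rintro u ⟨hu, hodd⟩
  exact aux2 a u v hv hu hodd
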